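/- Let (Ω, ℙ) be a probability space, let p ∈ (0,1], and let W₁, …, W_n : Ω → ℕ be independent random variables, each geometrically distributed with success probability p, i.e., ℙ(W_i = j) = (1−p)^{j−1}·p for every integer j ≥ 1. Then for every natural number k with k ≥ n, ℙ(∑_{i=1}^n W_i > 2k/p) ≤ exp(−k/4). -/

import Mathlib

set_option maxHeartbeats 1000000
open MeasureTheory ProbabilityTheory

lemma geom_aux {Ω : Type*} [MeasurableSpace Ω]
    (P : Measure Ω) [IsProbabilityMeasure P]
    (p : ℝ) (hp0 : 0 < p) (hp1 : p ≤ 1)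
    (V : Ω → ℕ) (hm : Measurable V)
    (hg : ∀ j : ℕ, 1 ≤ j → P {ω | V ω = j} = ENNReal.ofReal ((1 - p) ^ (j - 1) * p)) :
    Integrable (fun ω => Real.exp (-Real.log (1 - p/2) * (V ω : ℝ))) P ∧
      mgf (fun ω => (V ω : ℝ)) P (-Real.log (1 - p/2)) = 2 := by
  set q : ℝ := 1 - p/2 with hqdef
  have hq0 : 0 < q := by simp only [hqdef]; linarith
  have hq1 : q < 1 := by simp only [hqdef]; linarith
  set t : ℝ := -Real.log q with htdef
  have het : Real.exp t = q⁻¹ := by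
    rw [htdef, Real.exp_neg, Real.exp_log hq0]
  set μ : Measure ℕ := P.map V with hμdef
  have hμj : ∀ j : ℕ, μ {j} = P {ω | V ω = j} := by
    intro j
    rw [hμdef, Measure.map_apply hm (measurableSet_singleton j)]
    rfl
  set r : ℝ := (1 - p)/q with hrdef
  have hr0 : 0 ≤ r := div_nonneg (by linarith) hq0.le
  have hr1 : r < 1 := (div_lt_one hq0).mpr (by simp only [hqdef]; linarith)
  have h1p0 : (0:ℝ) ≤ 1 - p := by linarith
  have h1p1 : (1:ℝ) - p < 1 := by linarith
  -- sum of pmf over j ≥ 1 is 1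
  have hsum1 : ∑' m : ℕ, ((1 - p) ^ m * p) = 1 := by
    rw [tsum_mul_right, tsum_geometric_of_lt_one h1p0 h1p1]
    field_simp
    rw [sub_sub_cancel, div_self hp0.ne']
  have hsummable1 : Summable (fun m : ℕ => (1 - p) ^ m * p) :=
    (summable_geometric_of_lt_one h1p0 h1p1).mul_right p
  have hμm : ∀ m : ℕ, μ {m + 1} = ENNReal.ofReal ((1 - p) ^ m * p) := by
    intro m
    rw [hμj, hg (m + 1) (by omega)]
    simp
  -- μ {0} = 0
  have hμ0 : μ {0} = 0 := by
    have huniv : μ Set.univ = 1 := by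
      rw [hμdef, Measure.map_apply hm MeasurableSet.univ]
      simp
    have hsumμ : ∑' j : ℕ, μ {j} = 1 := by
      rw [← huniv, ← Set.iUnion_of_singleton ℕ]
      exact (measure_iUnion (fun i j hij => by simpa using hij)
        (fun j => measurableSet_singleton j)).symm
    rw [tsum_eq_zero_add' ENNReal.summable] at hsumμ
    have hshift : ∑' m : ℕ, μ {m + 1} = 1 := by
      rw [tsum_congr hμm, ← ENNReal.ofReal_tsum_of_nonneg
        (fun m => mul_nonneg (pow_nonneg h1p0 m) hp0.le) hsummable1, hsum1]
      simp
    rw [hshift] at hsumμ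
    have := congrArg (· - 1) hsumμ
    simpa [ENNReal.add_sub_cancel_right] using this
  -- geometric sum for the mgf
  have hterm : ∀ m : ℕ, Real.exp (t * ((m : ℝ) + 1)) * ((1 - p) ^ m * p)
      = (q⁻¹ * p) * r ^ m := by
    intro m
    have : t * ((m : ℝ) + 1) = ((m + 1 : ℕ) : ℝ) * t := by push_cast; ring
    rw [this, Real.exp_nat_mul, het, hrdef, div_pow, pow_succ]
    field_simp
    ring
    rw [← mul_pow, mul_inv_cancel₀ hq0.ne', one_pow, one_mul]
  have hS2 : ∑' m : ℕ, Real.exp (t * ((m : ℝ) + 1)) * ((1 - p) ^ m * p) = 2 := by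
    rw [tsum_congr hterm, tsum_mul_left, tsum_geometric_of_lt_one hr0 hr1]
    have h1r : 1 - r = (p/2)/q := by
      rw [hrdef]
      field_simp
      ring
    rw [h1r]
    field_simp
  have hsummR : Summable (fun m : ℕ => Real.exp (t * ((m : ℝ) + 1)) * ((1 - p) ^ m * p)) := by
    refine Summable.congr (((summable_geometric_of_lt_one hr0 hr1).mul_left (q⁻¹ * p))) ?_
    intro m; exact (hterm m).symm
  -- integrability on ℕ
  have hIntμ : Integrable (fun j : ℕ => Real.exp (t * (j : ℝ))) μ := by
    refine ⟨measurable_from_nat.aestronglyMeasurable, ?_⟩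
    rw [hasFiniteIntegral_iff_norm, lintegral_countable']
    have : ∑' j : ℕ, ENNReal.ofReal ‖Real.exp (t * (j : ℝ))‖ * μ {j}
        = ENNReal.ofReal 2 := by
      rw [tsum_eq_zero_add' ENNReal.summable]
      simp only [hμ0, mul_zero, zero_add]
      have heq : ∀ m : ℕ, ENNReal.ofReal ‖Real.exp (t * (((m + 1 : ℕ)) : ℝ))‖ * μ {m + 1}
          = ENNReal.ofReal (Real.exp (t * ((m : ℝ) + 1)) * ((1 - p) ^ m * p)) := by
        intro m
        rw [hμm, Real.norm_of_nonneg (Real.exp_pos _).le,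
          ← ENNReal.ofReal_mul (Real.exp_pos _).le]
        push_cast
        rfl
      rw [tsum_congr heq, ← ENNReal.ofReal_tsum_of_nonneg
        (fun m => mul_nonneg (Real.exp_pos _).le
          (mul_nonneg (pow_nonneg h1p0 m) hp0.le)) hsummR, hS2]
    rw [this]
    exact ENNReal.ofReal_lt_top
  -- summability of the real series indexed by all j
  have hsummAll : Summable (fun j : ℕ => (μ {j}).toReal • Real.exp (t * (j : ℝ))) := by
    rw [← summable_nat_add_iff 1]
    refine Summable.congr (hsummR.mul_left 1) ?_
    intro m
    rw [hμm, ENNReal.toReal_ofReal (mul_nonneg (pow_nonneg h1p0 m) hp0.le)]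
    push_cast
    rw [smul_eq_mul]
    ring
  constructor
  · -- integrability of exp (t * V)
    have : (fun ω => Real.exp (t * (V ω : ℝ))) = (fun j : ℕ => Real.exp (t * (j : ℝ))) ∘ V := rfl
    rw [this]
    exact (integrable_map_measure measurable_from_nat.aestronglyMeasurable
      hm.aemeasurable).mp (by rwa [← hμdef])
  · -- mgf = 2
    rw [mgf]
    have hmap : ∫ ω, Real.exp (t * (V ω : ℝ)) ∂P = ∫ j, Real.exp (t * (j : ℝ)) ∂μ := by
      rw [hμdef, integral_map hm.aemeasurable measurable_from_nat.aestronglyMeasurable]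
    rw [hmap, integral_countable' hIntμ]
    simp only [measureReal_def]
    rw [hsummAll.tsum_eq_zero_add]
    simp only [hμ0, ENNReal.toReal_zero, zero_smul, zero_add]
    have heq : ∀ m : ℕ, (μ {m + 1}).toReal • Real.exp (t * (((m + 1 : ℕ)) : ℝ))
        = Real.exp (t * ((m : ℝ) + 1)) * ((1 - p) ^ m * p) := by
      intro m
      rw [hμm, ENNReal.toReal_ofReal (mul_nonneg (pow_nonneg h1p0 m) hp0.le), smul_eq_mul]
      push_cast
      ring
    rw [tsum_congr heq, hS2]
theorem geometric_sum_concentration {Ω : Type*} [MeasurableSpace Ω]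
    (P : Measure Ω) [IsProbabilityMeasure P]
    (p : ℝ) (hp0 : 0 < p) (hp1 : p ≤ 1) (n : ℕ) (hn : 1 ≤ n)
    (W : Fin n → Ω → ℕ) (hmeas : ∀ i, Measurable (W i))
    (hindep : iIndepFun W P)
    (hgeom : ∀ i, ∀ j : ℕ, 1 ≤ j →
      P {ω | W i ω = j} = ENNReal.ofReal ((1 - p) ^ (j - 1) * p))
    (k : ℕ) (hk : n ≤ k) :
    P {ω | 2 * (k : ℝ) / p < ∑ i, (W i ω : ℝ)}
      ≤ ENNReal.ofReal (Real.exp (-(k : ℝ) / 4)) := by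
  have hq0 : (0:ℝ) < 1 - p/2 := by linarith
  have hq1 : (1:ℝ) - p/2 < 1 := by linarith
  set t : ℝ := -Real.log (1 - p/2) with htdef
  have ht0 : 0 ≤ t := by
    have := Real.log_nonpos (by linarith) hq1.le
    simp only [htdef]; linarith
  set X : Fin n → Ω → ℝ := fun i ω => (W i ω : ℝ) with hXdef
  have hXmeas : ∀ i, Measurable (X i) := fun i => measurable_from_nat.comp (hmeas i)
  have hindepX : iIndepFun X P :=
    hindep.comp (fun _ => (Nat.cast : ℕ → ℝ)) (fun _ => measurable_from_nat)
  have hI := fun i => geom_aux P p hp0 hp1 (W i) (hmeas i) (hgeom i)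
  have hInt : ∀ i, Integrable (fun ω => Real.exp (t * X i ω)) P := by
    intro i
    have := (hI i).1
    simpa [htdef, hXdef] using this
  have hIntS : Integrable (fun ω => Real.exp (t * (∑ i, X i) ω)) P :=
    hindepX.integrable_exp_mul_sum hXmeas (fun i _ => hInt i)
  have hchern := measure_ge_le_exp_mul_mgf (μ := P) (X := ∑ i, X i) (t := t)
    (2 * (k:ℝ) / p) ht0 hIntS
  have hmgfS : mgf (∑ i, X i) P t = 2 ^ n := by
    rw [hindepX.mgf_sum hXmeas Finset.univ]
    have : ∀ i : Fin n, mgf (X i) P t = 2 := fun i => (hI i).2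
    simp [this]
  rw [hmgfS] at hchern
  -- numeric bound
  have hnum : Real.exp (-t * (2 * (k:ℝ) / p)) * 2 ^ n ≤ Real.exp (-(k:ℝ) / 4) := by
    have hlogq : Real.log (1 - p/2) ≤ -p/2 := by
      have := Real.log_le_sub_one_of_pos hq0
      linarith
    have hkp : (0:ℝ) ≤ 2 * (k:ℝ) / p := by positivity
    have h2 : -t * (2 * (k:ℝ) / p) ≤ -(k:ℝ) := by
      have : -t * (2 * (k:ℝ) / p) = (2 * (k:ℝ) / p) * Real.log (1 - p/2) := by
        simp only [htdef]; ring
      rw [this]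
      calc (2 * (k:ℝ) / p) * Real.log (1 - p/2)
          ≤ (2 * (k:ℝ) / p) * (-p/2) := mul_le_mul_of_nonneg_left hlogq hkp
        _ = -(k:ℝ) := by field_simp
    have h3 : (2:ℝ) ^ n ≤ 2 ^ k := pow_le_pow_right₀ one_le_two hk
    have h4 : (2:ℝ) ^ k = Real.exp ((k:ℝ) * Real.log 2) := by
      rw [Real.exp_nat_mul, Real.exp_log two_pos]
    calc Real.exp (-t * (2 * (k:ℝ) / p)) * 2 ^ n
        ≤ Real.exp (-(k:ℝ)) * 2 ^ k := by
          exact mul_le_mul (Real.exp_le_exp.mpr h2) h3 (by positivity) (Real.exp_pos _).le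
      _ = Real.exp (-(k:ℝ) + (k:ℝ) * Real.log 2) := by rw [h4, ← Real.exp_add]
      _ ≤ Real.exp (-(k:ℝ) / 4) := by
          apply Real.exp_le_exp.mpr
          have hlog2 : Real.log 2 ≤ 3/4 := by
            have := Real.log_two_lt_d9
            linarith
          have hk0 : (0:ℝ) ≤ (k:ℝ) := Nat.cast_nonneg k
          nlinarith
  -- assemble
  have hsub : P {ω | 2 * (k : ℝ) / p < ∑ i, (W i ω : ℝ)}
      ≤ P {ω | 2 * (k:ℝ) / p ≤ (∑ i, X i) ω} := by
    apply measure_mono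
    intro ω hω
    simp only [Set.mem_setOf_eq, Finset.sum_apply] at hω ⊢
    exact hω.le
  refine hsub.trans ?_
  have hfin : P {ω | 2 * (k:ℝ) / p ≤ (∑ i, X i) ω} ≠ ⊤ := measure_ne_top _ _
  rw [← ENNReal.ofReal_toReal hfin]
  exact ENNReal.ofReal_le_ofReal (hchern.trans hnum)
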